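/- For a finite subset A of a Hausdorff abelian topological group G, the Kalton map κ_A : S_A → G is a topologically isomorphic embedding if and only if A is topologically independent in G. -/

import Mathlib

open Filter Topology

section Defs
variable {G : Type*} [AddCommGroup G] [TopologicalSpace G]

/-- A set `A` in a topological abelian group is *topologically independent* if `0 ∉ A` and
for every neighbourhood `W` of `0` there is a neighbourhood `U` of `0` such that whenever a
finite integer combination of elements of `A` lies in `U`, each of its terms lies in `W`. -/
def TopIndep (A : Set G) : Prop :=
  (0 : G) ∉ A ∧ ∀ W ∈ 𝓝 (0 : G), ∃ U ∈ 𝓝 (0 : G),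
    ∀ F : Finset G, ↑F ⊆ A → ∀ z : G → ℤ,
      (∑ a ∈ F, z a • a) ∈ U → ∀ a ∈ F, z a • a ∈ W

/-- Algebraic independence of a subset of an abelian group. -/
def Indep (A : Set G) : Prop :=
  (0 : G) ∉ A ∧ ∀ F : Finset G, ↑F ⊆ A → ∀ z : G → ℤ,
    (∑ a ∈ F, z a • a) = 0 → ∀ a ∈ F, z a • a = 0

/-- `A` is absolutely Cauchy summable: every neighbourhood of `0` contains the subgroup
generated by `A \ F` for some finite `F ⊆ A`. -/
def AbsCauchySummable (A : Set G) : Prop :=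
  ∀ U ∈ 𝓝 (0 : G), ∃ F : Finset G, ↑F ⊆ A ∧
    (AddSubgroup.closure (A \ ↑F) : Set G) ⊆ U

/-- `A` is absolutely summable: for every integer family the net of finite partial sums
converges. -/
def AbsSummable (A : Set G) : Prop :=
  ∀ z : A → ℤ, ∃ g : G, HasSum (fun a : A => z a • (a : G)) g

end Defs

/-- The direct sum `⊕_i H i`, realized as the subgroup of the product `Π i, H i`
consisting of finitely supported elements; it carries the topology inherited from the
Tychonoff product topology. -/
def FinSupp (ι : Type*) (H : ι → Type*) [∀ i, AddCommGroup (H i)] :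
    AddSubgroup (Π i, H i) where
  carrier := {f | {i | f i ≠ 0}.Finite}
  zero_mem' := by simp
  add_mem' := by
    intro f g hf hg
    refine (hf.union hg).subset fun i hi => ?_
    by_contra h
    simp only [Set.mem_union, Set.mem_setOf_eq, not_or, not_not] at h
    exact hi (by simp [h.1, h.2])
  neg_mem' := by
    intro f hf
    refine hf.subset fun i hi => ?_
    simp only [Set.mem_setOf_eq] at hi ⊢
    simpa using hi

/-- The Kalton map `κ_A : S_A = ⊕_{a ∈ A} ⟨a⟩ → G`, sending a finitely supported family to
the sum of its components. -/
noncomputable def kalton {G : Type*} [AddCommGroup G] (A : Set G)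
    (f : FinSupp A (fun a => AddSubgroup.zmultiples (a : G))) : G :=
  ∑ᶠ a : A, ((f.1 a : G))

section Sing
variable {ι : Type*} [DecidableEq ι] {H : ι → Type*} [∀ i, AddCommGroup (H i)]

/-- The element of the direct sum supported at `i` with value `x`. -/
def sing (i : ι) (x : H i) : FinSupp ι H :=
  ⟨Pi.single i x, (Set.finite_singleton i).subset (by
    intro b hb
    simp only [Set.mem_setOf_eq] at hb
    by_contra hba
    exact hb (Pi.single_eq_of_ne (by simpa using hba) x))⟩

end Sing


section Aux
variable {G : Type*} [AddCommGroup G] [TopologicalSpace G] [IsTopologicalAddGroup G]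
  (A : Set G)

lemma kalton_eq_sum [Fintype ↥A] (f : FinSupp A (fun a => AddSubgroup.zmultiples (a : G))) :
    kalton A f = ∑ a : ↥A, ((f.1 a : G)) := finsum_eq_sum_of_fintype _

lemma sum_set_coe (hfin : A.Finite) [Fintype ↥A] (h : G → G) :
    ∑ a : ↥A, h ↑a = ∑ x ∈ hfin.toFinset, h x := by
  calc ∑ a : ↥A, h ↑a = ∑ᶠ i ∈ A, h i := by
        rw [← finsum_eq_sum_of_fintype, finsum_set_coe_eq_finsum_mem]
    _ = ∑ x ∈ hfin.toFinset, h x := by rw [← finsum_mem_coe_finset, hfin.coe_toFinset]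

lemma kalton_add [Fintype ↥A] (f g : FinSupp A (fun a => AddSubgroup.zmultiples (a : G))) :
    kalton A (f + g) = kalton A f + kalton A g := by
  simp [kalton_eq_sum, Finset.sum_add_distrib]

lemma kalton_zero [Fintype ↥A] :
    kalton A (0 : FinSupp A (fun a => AddSubgroup.zmultiples (a : G))) = 0 := by
  simp [kalton_eq_sum]

lemma kalton_sub [Fintype ↥A] (f g : FinSupp A (fun a => AddSubgroup.zmultiples (a : G))) :
    kalton A (f - g) = kalton A f - kalton A g := by
  simp [kalton_eq_sum, Finset.sum_sub_distrib]

lemma kalton_cont [Fintype ↥A] : Continuous (kalton A) := by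
  have h : kalton A = fun f : FinSupp A (fun a => AddSubgroup.zmultiples (a : G)) =>
      ∑ a : ↥A, ((f.1 a : G)) := funext (kalton_eq_sum A)
  rw [h]
  exact continuous_finset_sum _ fun a _ =>
    continuous_subtype_val.comp ((continuous_apply a).comp continuous_subtype_val)

lemma isOpen_box [Fintype ↥A] {W : Set G} (hW : IsOpen W) :
    IsOpen {g : FinSupp A (fun a => AddSubgroup.zmultiples (a : G)) |
      ∀ a : ↥A, (g.1 a : G) ∈ W} := by
  have he : {g : FinSupp A (fun a => AddSubgroup.zmultiples (a : G)) |
      ∀ a : ↥A, (g.1 a : G) ∈ W} =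
      Subtype.val ⁻¹' (Set.univ.pi fun a : ↥A =>
        (Subtype.val ⁻¹' W : Set (AddSubgroup.zmultiples (a : G)))) := by
    ext g; simp [Set.mem_pi]
  rw [he]
  exact (isOpen_set_pi Set.finite_univ fun a _ =>
    hW.preimage continuous_subtype_val).preimage continuous_subtype_val

lemma nhds_zero_box [Fintype ↥A]
    {Ω : Set ↥(FinSupp A (fun a => AddSubgroup.zmultiples (a : G)))} (hΩ : Ω ∈ 𝓝 0) :
    ∃ W ∈ 𝓝 (0:G), {g : FinSupp A (fun a => AddSubgroup.zmultiples (a : G)) |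
      ∀ a : ↥A, (g.1 a : G) ∈ W} ⊆ Ω := by
  rw [mem_nhds_subtype] at hΩ
  obtain ⟨s, hs, hsub⟩ := hΩ
  rw [show ((0 : FinSupp A (fun a => AddSubgroup.zmultiples (a : G))) :
      Π a : ↥A, AddSubgroup.zmultiples (a : G)) = 0 from rfl, nhds_pi] at hs
  obtain ⟨I, hIfin, t, ht, hIt⟩ := Filter.mem_pi.mp hs
  have hta : ∀ a : ↥A, ∃ W ∈ 𝓝 (0:G),
      (Subtype.val ⁻¹' W : Set (AddSubgroup.zmultiples (a : G))) ⊆ t a := by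
    intro a
    have h := ht a
    rw [show ((0 : Π a : ↥A, AddSubgroup.zmultiples (a : G)) a) =
      (0 : AddSubgroup.zmultiples (a : G)) from rfl, mem_nhds_subtype] at h
    obtain ⟨u, hu, husub⟩ := h
    exact ⟨u, by simpa using hu, husub⟩
  choose W hW hWsub using hta
  refine ⟨⋂ a, W a, Filter.iInter_mem.mpr hW, ?_⟩
  intro g hg
  apply hsub
  apply hIt
  intro a _
  exact hWsub a (Set.mem_iInter.mp (hg a) a)

end Aux

theorem stmt7 {G : Type*} [AddCommGroup G] [TopologicalSpace G] [IsTopologicalAddGroup G]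
    [T2Space G] (A : Set G) (h0 : (0 : G) ∉ A) (hfin : A.Finite) :
    (Function.Injective (kalton A) ∧ Continuous (kalton A) ∧
      ∀ O : Set ↥(FinSupp A (fun a => AddSubgroup.zmultiples (a : G))), IsOpen O →
        ∃ V : Set G, IsOpen V ∧ kalton A '' O = V ∩ Set.range (kalton A))
    ↔ TopIndep A := by
  classical
  haveI : Fintype ↥A := hfin.fintype
  have hFsub : hfin.toFinset ⊆ hfin.toFinset := le_refl _
  -- a helper computing kalton of a general element via chosen coefficients
  have hrepr : ∀ g : ↥(FinSupp A (fun a => AddSubgroup.zmultiples (a : G))),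
      ∃ z : G → ℤ, (∀ b : ↥A, (g.1 b : G) = z ↑b • (↑b : G)) ∧
        kalton A g = ∑ x ∈ hfin.toFinset, z x • x := by
    intro g
    have hz : ∀ b : ↥A, ∃ k : ℤ, k • (b : G) = (g.1 b : G) :=
      fun b => AddSubgroup.mem_zmultiples_iff.mp (g.1 b).2
    choose zz hzz using hz
    refine ⟨fun x => if h : x ∈ A then zz ⟨x, h⟩ else 0, fun b => ?_, ?_⟩
    · simp only [dif_pos b.2, Subtype.coe_eta]; exact (hzz b).symm
    · rw [kalton_eq_sum, ← sum_set_coe A hfin (fun x => (if h : x ∈ A then zz ⟨x, h⟩ else 0) • x)]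
      refine Finset.sum_congr rfl fun b _ => ?_
      simp only [dif_pos b.2, Subtype.coe_eta]
      exact (hzz b).symm
  constructor
  · rintro ⟨hinj, -, hopen⟩
    refine ⟨h0, fun W hW => ?_⟩
    obtain ⟨W', hW'sub, hW'open, hW'0⟩ := mem_nhds_iff.mp hW
    set O : Set ↥(FinSupp A (fun a => AddSubgroup.zmultiples (a : G))) :=
      {g | ∀ a : ↥A, (g.1 a : G) ∈ W'} with hOdef
    obtain ⟨V, hVopen, hVeq⟩ := hopen O (isOpen_box A hW'open)
    have h0O : (0 : ↥(FinSupp A (fun a => AddSubgroup.zmultiples (a : G)))) ∈ O := by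
      intro a; simpa using hW'0
    have h0V : (0 : G) ∈ V := by
      have hmem : kalton A 0 ∈ V ∩ Set.range (kalton A) := by
        rw [← hVeq]; exact ⟨0, h0O, rfl⟩
      rw [kalton_zero] at hmem
      exact hmem.1
    refine ⟨V, hVopen.mem_nhds h0V, fun F hF z hsum a haF => ?_⟩
    -- build the element f supported on F
    set f : ↥(FinSupp A (fun a => AddSubgroup.zmultiples (a : G))) :=
      ⟨fun b : ↥A => if h : (b : G) ∈ F then
          ⟨z ↑b • (↑b : G), AddSubgroup.mem_zmultiples_iff.mpr ⟨z ↑b, rfl⟩⟩ else 0,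
        Set.toFinite _⟩ with hfdef
    have hFto : F ⊆ hfin.toFinset := fun x hx => hfin.mem_toFinset.mpr (hF hx)
    have hκf : kalton A f = ∑ x ∈ F, z x • x := by
      rw [kalton_eq_sum]
      have hc : ∀ b : ↥A, ((f.1 b : G)) =
          (fun x => if x ∈ F then z x • x else 0) ↑b := by
        intro b
        by_cases hb : (b : G) ∈ F <;> simp [hfdef, hb]
      rw [Finset.sum_congr rfl fun b _ => hc b,
        sum_set_coe A hfin (fun x => if x ∈ F then z x • x else 0),
        Finset.sum_ite_mem, Finset.inter_eq_right.mpr hFto]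
    have hmem : kalton A f ∈ kalton A '' O := by
      rw [hVeq]
      exact ⟨hκf ▸ hsum, ⟨f, rfl⟩⟩
    obtain ⟨g, hgO, hgf⟩ := hmem
    have hfO : f ∈ O := by rw [← hinj hgf]; exact hgO
    have := hfO ⟨a, hF haF⟩
    apply hW'sub
    simpa [hfdef, haF] using this
  · rintro ⟨-, hTI⟩
    have hinj : Function.Injective (kalton A) := by
      intro f g hfg
      have hk0 : kalton A (f - g) = 0 := by rw [kalton_sub, hfg, sub_self]
      obtain ⟨z, hzc, hzs⟩ := hrepr (f - g)
      rw [hk0] at hzs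
      have hzero : ∀ b : ↥A, ((f - g).1 b : G) = 0 := by
        intro b
        have hall : ∀ W ∈ 𝓝 (0 : G), ((f - g).1 b : G) ∈ W := by
          intro W hW
          obtain ⟨U, hU, hUimp⟩ := hTI W hW
          have := hUimp hfin.toFinset (by rw [hfin.coe_toFinset]) z
            (by rw [← hzs]; exact mem_of_mem_nhds hU) ↑b (hfin.mem_toFinset.mpr b.2)
          rwa [← hzc b] at this
        by_contra hne
        exact hne (by
          have h1 : (0 : G) ∈ closure {((f - g).1 b : G)} := by
            rw [mem_closure_iff_nhds]
            intro W hW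
            exact ⟨((f - g).1 b : G), hall W hW, rfl⟩
          rw [closure_singleton] at h1
          exact (Set.mem_singleton_iff.mp h1).symm)
      have : f - g = 0 := by
        apply Subtype.ext
        funext b
        exact Subtype.ext (by simpa using hzero b)
      exact sub_eq_zero.mp this
    refine ⟨hinj, kalton_cont A, ?_⟩
    intro O hO
    -- key: preimage criterion at 0
    have key : ∀ Ω : Set ↥(FinSupp A (fun a => AddSubgroup.zmultiples (a : G))),
        Ω ∈ 𝓝 0 → ∃ V : Set G, IsOpen V ∧ (0 : G) ∈ V ∧
          ∀ g : ↥(FinSupp A (fun a => AddSubgroup.zmultiples (a : G))),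
            kalton A g ∈ V → g ∈ Ω := by
      intro Ω hΩ
      obtain ⟨W, hW, hbox⟩ := nhds_zero_box A hΩ
      obtain ⟨U, hU, hUimp⟩ := hTI W hW
      refine ⟨interior U, isOpen_interior, mem_interior_iff_mem_nhds.mpr hU, fun g hg => ?_⟩
      obtain ⟨z, hzc, hzs⟩ := hrepr g
      have hterm := hUimp hfin.toFinset (by rw [hfin.coe_toFinset]) z
        (by rw [← hzs]; exact interior_subset hg)
      apply hbox
      intro b
      rw [hzc b]
      exact hterm ↑b (hfin.mem_toFinset.mpr b.2)
    have hnb : ∀ f ∈ O, ((fun g => g + f) ⁻¹'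
        O : Set ↥(FinSupp A (fun a => AddSubgroup.zmultiples (a : G)))) ∈ 𝓝 0 := by
      intro f hf
      refine (hO.preimage (continuous_add_right f)).mem_nhds ?_
      simpa using hf
    choose V hVopen hV0 hVspec using fun f hf => key _ (hnb f hf)
    refine ⟨⋃ (f : ↥(FinSupp A (fun a => AddSubgroup.zmultiples (a : G)))) (hf : f ∈ O),
      (fun x => x + kalton A f) '' V f hf, ?_, ?_⟩
    · exact isOpen_iUnion fun f => isOpen_iUnion fun hf =>
        isOpenMap_add_right (kalton A f) _ (hVopen f hf)
    · apply Set.Subset.antisymm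
      · rintro y ⟨f, hf, rfl⟩
        refine ⟨Set.mem_iUnion.mpr ⟨f, Set.mem_iUnion.mpr ⟨hf, 0, hV0 f hf, by simp⟩⟩, f, rfl⟩
      · rintro y ⟨hyV, g, rfl⟩
        obtain ⟨f, hmem⟩ := Set.mem_iUnion.mp hyV
        obtain ⟨hf, x, hx, hxy⟩ := Set.mem_iUnion.mp hmem
        have hgx : kalton A (g - f) ∈ V f hf := by
          rw [kalton_sub]
          rw [← hxy]
          simpa using hx
        have := hVspec f hf _ hgx
        simp only [Set.mem_preimage, sub_add_cancel] at this
        exact ⟨g, this, rfl⟩
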